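/- arXiv:1112.2322 — 3 statements merged into one kernel-verified Lean document; each statement's English description precedes it below -/
import Mathlib

section
/- Let N and n be noncommuting variables satisfying Nn = nN + N (i.e., the shift relation). Then for all r ≥ 0, (N + n)^r = Σ_{d=0}^{r} P_{r,d}(n) · N^d, where P_{r,d}(n) = Σ over all compositions (p_0, ..., p_d) of r - d into d+1 nonnegative integers of the product Π_{j=0}^{d} (n + j)^{p_j}. -/
open Finset

def T {R : Type*} [Ring R] (x : R) (k m : ℕ) : R :=
  ∑ p ∈ Finset.Nat.antidiagonalTuple k m,
    (List.ofFn fun j : Fin k => (x + (j : ℕ)) ^ (p j)).prod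

theorem T_zero {R : Type*} [Ring R] (x : R) (k : ℕ) : T x k 0 = 1 := by
  simp [T, Finset.Nat.antidiagonalTuple_zero_right, List.prod_ofFn]

theorem T_zero_left {R : Type*} [Ring R] (x : R) (m : ℕ) :
    T x 0 (m + 1) = 0 := by
  simp [T, Finset.Nat.antidiagonalTuple_zero_succ]

theorem T_succ {R : Type*} [Ring R] (x : R) (k m : ℕ) :
    T x (k + 1) m = ∑ ab ∈ Finset.HasAntidiagonal.antidiagonal m, x ^ ab.1 * T (x + 1) k ab.2 := by
  rw [T]
  simp_rw [T, Finset.mul_sum]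
  rw [Finset.sum_sigma']
  apply Finset.sum_nbij' (i := fun p => (⟨(p 0, m - p 0), Fin.tail p⟩ : (_ : ℕ × ℕ) × (Fin k → ℕ)))
    (j := fun q => Fin.cons q.1.1 q.2)
  · intro p hp
    rw [Finset.Nat.mem_antidiagonalTuple] at hp
    have h0 : p 0 ≤ m := by
      rw [← hp]; exact Finset.single_le_sum (f := p) (fun i _ => Nat.zero_le _) (Finset.mem_univ 0)
    refine Finset.mem_sigma.2 ⟨Finset.HasAntidiagonal.mem_antidiagonal.2 (by dsimp only; omega), ?_⟩
    rw [Finset.Nat.mem_antidiagonalTuple]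
    have := Fin.sum_univ_succ p
    rw [hp] at this
    have : ∑ i : Fin k, p i.succ = m - p 0 := by omega
    simpa [Fin.tail] using this
  · intro q hq
    rw [Finset.mem_sigma] at hq
    obtain ⟨h1, h2⟩ := hq
    rw [Finset.HasAntidiagonal.mem_antidiagonal] at h1
    rw [Finset.Nat.mem_antidiagonalTuple] at h2 ⊢
    rw [Fin.sum_cons, h2, h1]
  · intro p hp
    exact Fin.cons_self_tail p
  · intro q hq
    rw [Finset.mem_sigma] at hq
    obtain ⟨h1, h2⟩ := hq
    rw [Finset.HasAntidiagonal.mem_antidiagonal] at h1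
    rw [Finset.Nat.mem_antidiagonalTuple] at h2
    have : (Fin.cons q.1.1 q.2 : Fin (k+1) → ℕ) 0 = q.1.1 := rfl
    ext
    · simp [this]
    · simp [this, ← h1, ← h2]
    · simp [Fin.tail]
  · intro p hp
    rw [List.ofFn_succ]
    have key : ∀ i : Fin k, x + ((Fin.succ i : Fin (k+1)) : ℕ) = (x + 1) + (i : ℕ) := by
      intro i; push_cast [Fin.val_succ]; rw [add_assoc, add_comm (1 : R)]
    simp only [Fin.val_zero, Nat.cast_zero, add_zero, List.prod_cons, key, Fin.tail]

theorem T_rec {R : Type*} [Ring R] (x : R) (k m : ℕ) :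
    T x (k + 1) (m + 1) = x * T x (k + 1) m + T (x + 1) k (m + 1) := by
  rw [T_succ, T_succ, Finset.Nat.antidiagonal_succ, Finset.sum_cons, Finset.sum_map,
    Finset.mul_sum]
  simp only [pow_zero, one_mul, Function.Embedding.coe_prodMap, Function.Embedding.coeFn_mk,
    Function.Embedding.refl_apply, Prod.map_fst, Prod.map_snd, pow_succ', mul_assoc]
  rw [add_comm]

theorem comm_c {R : Type*} [Ring R] {N n : R} (h : N * n = n * N + N) (c : ℕ) :
    N * (n + (c : R)) = (n + (c : R) + 1) * N := by
  rw [mul_add, h, add_mul, add_mul, one_mul, (Nat.cast_commute c N).eq]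
  abel

theorem comm_pow {R : Type*} [Ring R] {N n : R} (h : N * n = n * N + N) (c p : ℕ) :
    N * (n + (c : R)) ^ p = (n + (c : R) + 1) ^ p * N := by
  induction p with
  | zero => simp
  | succ p ih =>
    rw [pow_succ, ← mul_assoc, ih, mul_assoc, comm_c h, pow_succ, mul_assoc]

theorem comm_prod {R : Type*} [Ring R] {N n : R} (h : N * n = n * N + N) :
    ∀ (k : ℕ) (c : ℕ) (p : Fin k → ℕ),
      N * (List.ofFn fun j : Fin k => (n + ((c + (j : ℕ) : ℕ) : R)) ^ (p j)).prod =
        (List.ofFn fun j : Fin k => (n + 1 + ((c + (j : ℕ) : ℕ) : R)) ^ (p j)).prod * N := by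
  intro k
  induction k with
  | zero => simp
  | succ k ih =>
    intro c p
    rw [List.ofFn_succ, List.ofFn_succ, List.prod_cons, List.prod_cons, ← mul_assoc]
    have h0 : ∀ y : R, N * (y + ((c + ((0 : Fin (k+1)) : ℕ) : ℕ) : R)) ^ (p 0)
        = (y + ((c + ((0 : Fin (k+1)) : ℕ) : ℕ) : R) + 1) ^ (p 0) * N → True := fun _ _ => trivial
    have e1 : N * (n + ((c + ((0 : Fin (k+1)) : ℕ) : ℕ) : R)) ^ (p 0)
        = (n + ((c + ((0 : Fin (k+1)) : ℕ) : ℕ) : R) + 1) ^ (p 0) * N := comm_pow h _ _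
    rw [e1, mul_assoc]
    have e2 : ∀ j : Fin k, ((c + ((Fin.succ j : Fin (k+1)) : ℕ) : ℕ) : R)
        = (((c + 1) + (j : ℕ) : ℕ) : R) := by
      intro j; congr 1; rw [Fin.val_succ]; omega
    have e3 : (List.ofFn fun j : Fin k =>
          (n + ((c + ((Fin.succ j : Fin (k+1)) : ℕ) : ℕ) : R)) ^ (p j.succ)).prod
        = (List.ofFn fun j : Fin k => (n + (((c + 1) + (j : ℕ) : ℕ) : R)) ^ (p j.succ)).prod := by
      have : (fun j : Fin k => (n + ((c + ((Fin.succ j : Fin (k+1)) : ℕ) : ℕ) : R)) ^ (p j.succ))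
          = fun j : Fin k => (n + (((c + 1) + (j : ℕ) : ℕ) : R)) ^ (p j.succ) := by
        funext j; rw [e2]
      rw [this]
    have e4 : (List.ofFn fun j : Fin k =>
          (n + 1 + ((c + ((Fin.succ j : Fin (k+1)) : ℕ) : ℕ) : R)) ^ (p j.succ)).prod
        = (List.ofFn fun j : Fin k => (n + 1 + (((c + 1) + (j : ℕ) : ℕ) : R)) ^ (p j.succ)).prod := by
      have : (fun j : Fin k => (n + 1 + ((c + ((Fin.succ j : Fin (k+1)) : ℕ) : ℕ) : R)) ^ (p j.succ))
          = fun j : Fin k => (n + 1 + (((c + 1) + (j : ℕ) : ℕ) : R)) ^ (p j.succ) := by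
        funext j; rw [e2]
      rw [this]
    rw [e3, e4, ih (c + 1) (fun j => p j.succ), ← mul_assoc]
    congr 2
    rw [add_right_comm]

theorem comm_T {R : Type*} [Ring R] {N n : R} (h : N * n = n * N + N) (k m : ℕ) :
    N * T n k m = T (n + 1) k m * N := by
  rw [T, T, Finset.mul_sum, Finset.sum_mul]
  refine Finset.sum_congr rfl fun p _ => ?_
  have := comm_prod h k 0 p
  simpa using this

theorem main_aux {R : Type*} [Ring R] (N n : R) (h : N * n = n * N + N) :
    ∀ r : ℕ, (N + n) ^ r = ∑ d ∈ Finset.range (r + 1), T n (d + 1) (r - d) * N ^ d := by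
  intro r
  induction r with
  | zero => simp [T_zero]
  | succ r ih =>
    have lhs_eq : (N + n) ^ (r + 1)
        = (∑ d ∈ Finset.range (r + 1), n * T n (d + 1) (r - d) * N ^ d)
          + ((∑ e ∈ Finset.range r, T (n + 1) (e + 1) (r - e) * N ^ (e + 1)) + N ^ (r + 1)) := by
      rw [pow_succ', ih, Finset.mul_sum]
      have step : ∀ d ∈ Finset.range (r + 1), (N + n) * (T n (d + 1) (r - d) * N ^ d)
          = n * T n (d + 1) (r - d) * N ^ d + T (n + 1) (d + 1) (r - d) * N ^ (d + 1) := by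
        intro d _
        rw [add_mul, ← mul_assoc N, comm_T h, mul_assoc, ← pow_succ', ← mul_assoc n, add_comm]
      rw [Finset.sum_congr rfl step, Finset.sum_add_distrib]
      congr 1
      rw [Finset.sum_range_succ, Nat.sub_self, T_zero, one_mul]
    have hc : (∑ d ∈ Finset.range (r + 1), T (n + 1) d (r - d + 1) * N ^ d)
        = ∑ e ∈ Finset.range r, T (n + 1) (e + 1) (r - e) * N ^ (e + 1) := by
      rw [Finset.sum_range_succ']
      have h0 : T (n + 1) 0 (r - 0 + 1) * N ^ 0 = 0 := by
        rw [Nat.sub_zero, T_zero_left, zero_mul]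
      rw [h0, add_zero]
      refine Finset.sum_congr rfl fun e he => ?_
      rw [Finset.mem_range] at he
      have he' : r - (e + 1) + 1 = r - e := by omega
      rw [he']
    have rhs_eq : (∑ d ∈ Finset.range (r + 1 + 1), T n (d + 1) (r + 1 - d) * N ^ d)
        = (∑ d ∈ Finset.range (r + 1), n * T n (d + 1) (r - d) * N ^ d)
          + ((∑ e ∈ Finset.range r, T (n + 1) (e + 1) (r - e) * N ^ (e + 1)) + N ^ (r + 1)) := by
      rw [Finset.sum_range_succ, Nat.sub_self, T_zero, one_mul]
      have step2 : ∀ d ∈ Finset.range (r + 1), T n (d + 1) (r + 1 - d) * N ^ d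
          = n * T n (d + 1) (r - d) * N ^ d + T (n + 1) d (r - d + 1) * N ^ d := by
        intro d hd
        rw [Finset.mem_range] at hd
        have hd' : r + 1 - d = (r - d) + 1 := by omega
        rw [hd', T_rec, add_mul]
      rw [Finset.sum_congr rfl step2, Finset.sum_add_distrib, hc, add_assoc]
    rw [lhs_eq, rhs_eq]

/-- The binomial theorem for `(N + n)^r` in the shift algebra `N*n = n*N + N`:
`(N+n)^r = Σ_{d=0}^r P_{r,d}(n) N^d` where `P_{r,d}(n)` is the sum over all
compositions `(p_0,…,p_d)` of `r-d` into `d+1` nonnegative parts of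
`Π_{j=0}^d (n+j)^{p_j}`. -/
theorem shift_binomial_theorem {R : Type*} [Ring R] (N n : R)
    (h : N * n = n * N + N) (r : ℕ) :
    (N + n) ^ r =
      ∑ d ∈ Finset.range (r + 1),
        (∑ p ∈ Finset.Nat.antidiagonalTuple (d + 1) (r - d),
            (List.ofFn fun j : Fin (d + 1) => (n + (j : ℕ)) ^ (p j)).prod) * N ^ d := by
  simpa [T] using main_aux N n h r
end

section
/- In the Weyl algebra with generators x and D satisfying Dx = xD + 1, for every r ≥ 0: (x + D)^r = Σ_{k=0}^{⌊r/2⌋} (r! / (2^k · k!)) · Σ_{j+l = r-2k} (1/(j! · l!)) · x^j · D^l. -/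
open Finset

section Weyl

variable {A : Type*} [Ring A] [Algebra ℚ A] (x D : A)

noncomputable def TT (m : ℕ) : A :=
  ∑ i ∈ range (m + 1), ((1 : ℚ) / (i.factorial * (m - i).factorial)) • (x ^ i * D ^ (m - i))

noncomputable def cc (r k : ℕ) : ℚ := (r.factorial : ℚ) / (2 ^ k * k.factorial)

variable (h : D * x = x * D + 1)

include h in
lemma Dpow_mul_x (l : ℕ) : D ^ l * x = x * D ^ l + (l : ℚ) • D ^ (l - 1) := by
  induction l with
  | zero => simp
  | succ n ih =>
    have e1 : D ^ (n + 1) * x = D * (D ^ n * x) := by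
      rw [pow_succ']; exact mul_assoc _ _ _
    have e3 : D * ((n : ℚ) • D ^ (n - 1)) = (n : ℚ) • (D * D ^ (n - 1)) :=
      mul_smul_comm _ _ _
    rw [e1, ih, mul_add, ← mul_assoc, h, e3, add_mul, one_mul, mul_assoc, ← pow_succ',
      Nat.add_sub_cancel, add_assoc]
    congr 1
    cases n with
    | zero => simp
    | succ m =>
      have : D * D ^ (m + 1 - 1) = D ^ (m + 1) := by
        rw [Nat.add_sub_cancel, ← pow_succ']
      rw [this]
      push_cast
      module

include h in
lemma mono_mul (i l : ℕ) :
    (x ^ i * D ^ l) * (x + D) =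
      x ^ (i + 1) * D ^ l + (l : ℚ) • (x ^ i * D ^ (l - 1)) + x ^ i * D ^ (l + 1) := by
  rw [mul_add, mul_assoc, Dpow_mul_x x D h, mul_add, ← mul_assoc, mul_smul_comm,
    ← pow_succ, mul_assoc, ← pow_succ]

end Weyl

section
variable {A : Type*} [Ring A] [Algebra ℚ A] (x D : A) (h : D * x = x * D + 1)

lemma TT_zero : TT x D 0 = 1 := by simp [TT]

lemma TT_zero_mul : TT x D 0 * (x + D) = TT x D 1 := by
  simp [TT, Finset.sum_range_succ, Nat.factorial]
  abel

include h in
lemma TT_succ_mul (n : ℕ) :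
    TT x D (n + 1) * (x + D) = ((n + 2 : ℕ) : ℚ) • TT x D (n + 2) + TT x D n := by
  have expand : TT x D (n + 1) * (x + D) =
      (∑ i ∈ range (n + 2), ((1 : ℚ) / (i.factorial * (n + 1 - i).factorial)) •
          (x ^ (i + 1) * D ^ (n + 1 - i)))
      + (∑ i ∈ range (n + 2), ((1 : ℚ) / (i.factorial * (n + 1 - i).factorial)) •
          (((n + 1 - i : ℕ) : ℚ) • (x ^ i * D ^ (n + 1 - i - 1))))
      + (∑ i ∈ range (n + 2), ((1 : ℚ) / (i.factorial * (n + 1 - i).factorial)) •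
          (x ^ i * D ^ (n + 1 - i + 1))) := by
    rw [TT, sum_mul, ← Finset.sum_add_distrib, ← Finset.sum_add_distrib]
    refine Finset.sum_congr rfl fun i hi => ?_
    rw [smul_mul_assoc, mono_mul x D h, smul_add, smul_add]
  rw [expand]
  have eS2 : (∑ i ∈ range (n + 2), ((1 : ℚ) / (i.factorial * (n + 1 - i).factorial)) •
      (((n + 1 - i : ℕ) : ℚ) • (x ^ i * D ^ (n + 1 - i - 1)))) = TT x D n := by
    rw [Finset.sum_range_succ]
    have hz : ((n + 1 - (n + 1) : ℕ) : ℚ) = 0 := by norm_num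
    rw [hz]
    simp only [zero_smul, smul_zero, add_zero]
    rw [TT]
    refine Finset.sum_congr rfl fun i hi => ?_
    have hi' : i ≤ n := by simpa [Nat.lt_succ_iff] using hi
    have e1 : n + 1 - i - 1 = n - i := by omega
    have e2 : n + 1 - i = (n - i) + 1 := by omega
    rw [e1, smul_smul]
    congr 1
    rw [e2, Nat.factorial_succ]
    have p1 : (0 : ℚ) < (i.factorial : ℚ) := by exact_mod_cast i.factorial_pos
    have p2 : (0 : ℚ) < ((n - i).factorial : ℚ) := by exact_mod_cast (n - i).factorial_pos
    have hin : (i : ℚ) ≤ n := by exact_mod_cast hi'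
    have p3 : (n : ℚ) - i + 1 ≠ 0 := by linarith
    push_cast
    field_simp
  have key : ∀ i ∈ range (n + 1),
      ((1 : ℚ) / (i.factorial * (n + 1 - i).factorial)) • (x ^ (i + 1) * D ^ (n + 1 - i))
      + ((1 : ℚ) / ((i + 1).factorial * (n - i).factorial)) • (x ^ (i + 1) * D ^ (n + 1 - i))
      = ((n + 2 : ℕ) : ℚ) • (((1 : ℚ) / ((i + 1).factorial * (n + 2 - (i + 1)).factorial)) •
          (x ^ (i + 1) * D ^ (n + 2 - (i + 1)))) := by
    intro i hi
    have hi' : i ≤ n := by simpa [Nat.lt_succ_iff] using hi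
    have e1 : n + 2 - (i + 1) = n + 1 - i := by omega
    rw [e1, smul_smul, ← add_smul]
    congr 1
    have e2 : (n + 1 - i).factorial = (n + 1 - i) * (n - i).factorial := by
      rw [show n + 1 - i = (n - i) + 1 by omega, Nat.factorial_succ]
    have e3 : (i + 1).factorial = (i + 1) * i.factorial := Nat.factorial_succ i
    have p1 : ((i.factorial : ℚ)) ≠ 0 := by exact_mod_cast i.factorial_pos.ne'
    have p2 : (((n - i).factorial : ℚ)) ≠ 0 := by exact_mod_cast (n - i).factorial_pos.ne'
    have hin : (i : ℚ) ≤ n := by exact_mod_cast hi'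
    have p3 : (n : ℚ) - i + 1 ≠ 0 := by linarith
    have p4 : (i : ℚ) + 1 ≠ 0 := by positivity
    have e4 : ((n + 1 - i : ℕ) : ℚ) = (n : ℚ) - i + 1 := by
      push_cast [Nat.cast_sub (by omega : i ≤ n + 1)]; ring
    rw [e2, e3]
    push_cast [e4]
    field_simp
    ring
  have eS3 : (∑ i ∈ range (n + 2), ((1 : ℚ) / (i.factorial * (n + 1 - i).factorial)) •
        (x ^ i * D ^ (n + 1 - i + 1)))
      = (∑ i ∈ range (n + 1), ((1 : ℚ) / ((i + 1).factorial * (n - i).factorial)) •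
          (x ^ (i + 1) * D ^ (n + 1 - i)))
        + ((1 : ℚ) / ((0 : ℕ).factorial * (n + 1 - 0).factorial)) •
            (x ^ 0 * D ^ (n + 1 - 0 + 1)) := by
    rw [Finset.sum_range_succ']
    congr 1
    refine Finset.sum_congr rfl fun i hi => ?_
    have hi' : i ≤ n := by simpa [Nat.lt_succ_iff] using hi
    have e1 : n + 1 - (i + 1) = n - i := by omega
    rw [e1]
    have e2 : n - i + 1 = n + 1 - i := by omega
    rw [e2]
  have eLHS : (∑ i ∈ range (n + 2), ((1 : ℚ) / (i.factorial * (n + 1 - i).factorial)) •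
        (x ^ (i + 1) * D ^ (n + 1 - i)))
      + (∑ i ∈ range (n + 2), ((1 : ℚ) / (i.factorial * (n + 1 - i).factorial)) •
        (x ^ i * D ^ (n + 1 - i + 1)))
      = (∑ i ∈ range (n + 1),
          (((1 : ℚ) / (i.factorial * (n + 1 - i).factorial)) • (x ^ (i + 1) * D ^ (n + 1 - i))
          + ((1 : ℚ) / ((i + 1).factorial * (n - i).factorial)) • (x ^ (i + 1) * D ^ (n + 1 - i))))
        + (((1 : ℚ) / ((n + 1).factorial * (n + 1 - (n + 1)).factorial)) •
            (x ^ (n + 1 + 1) * D ^ (n + 1 - (n + 1)))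
          + ((1 : ℚ) / ((0 : ℕ).factorial * (n + 1 - 0).factorial)) •
            (x ^ 0 * D ^ (n + 1 - 0 + 1))) := by
    rw [eS3, Finset.sum_range_succ, add_add_add_comm, ← Finset.sum_add_distrib]
  have eRHS : ((n + 2 : ℕ) : ℚ) • TT x D (n + 2)
      = (∑ i ∈ range (n + 1), ((n + 2 : ℕ) : ℚ) •
          (((1 : ℚ) / ((i + 1).factorial * (n + 2 - (i + 1)).factorial)) •
            (x ^ (i + 1) * D ^ (n + 2 - (i + 1)))))
        + (((n + 2 : ℕ) : ℚ) • (((1 : ℚ) / ((n + 1 + 1).factorial * (n + 2 - (n + 1 + 1)).factorial)) •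
            (x ^ (n + 1 + 1) * D ^ (n + 2 - (n + 1 + 1))))
          + ((n + 2 : ℕ) : ℚ) • (((1 : ℚ) / ((0 : ℕ).factorial * (n + 2 - 0).factorial)) •
            (x ^ (0 : ℕ) * D ^ (n + 2 - 0)))) := by
    rw [TT, Finset.smul_sum, Finset.sum_range_succ', Finset.sum_range_succ, add_assoc]
  have eS13 : (∑ i ∈ range (n + 2), ((1 : ℚ) / (i.factorial * (n + 1 - i).factorial)) •
        (x ^ (i + 1) * D ^ (n + 1 - i)))
      + (∑ i ∈ range (n + 2), ((1 : ℚ) / (i.factorial * (n + 1 - i).factorial)) •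
        (x ^ i * D ^ (n + 1 - i + 1)))
      = ((n + 2 : ℕ) : ℚ) • TT x D (n + 2) := by
    rw [eLHS, eRHS]
    congr 1
    · exact Finset.sum_congr rfl key
    congr 1
    · rw [smul_smul]
      have e1 : n + 1 - (n + 1) = 0 := by omega
      have e2 : n + 2 - (n + 1 + 1) = 0 := by omega
      rw [e1, e2]
      congr 1
      have p1 : (((n + 1).factorial : ℚ)) ≠ 0 := by exact_mod_cast (n + 1).factorial_pos.ne'
      rw [Nat.factorial_succ (n + 1)]
      push_cast
      field_simp
      ring
    · rw [smul_smul]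
      have e1 : n + 1 - 0 + 1 = n + 2 := by omega
      have e2 : n + 2 - 0 = n + 2 := by omega
      rw [e1, e2]
      congr 1
      have p1 : (((n + 1).factorial : ℚ)) ≠ 0 := by exact_mod_cast (n + 1).factorial_pos.ne'
      rw [show n + 1 - 0 = n + 1 by omega, Nat.factorial_succ (n + 1)]
      push_cast
      field_simp
      ring
  rw [add_right_comm, eS2, eS13]


lemma cc_rec (r k : ℕ) :
    cc r (k + 1) * ((r : ℚ) - 2 * (k + 1) + 1) + cc r k = cc (r + 1) (k + 1) := by
  unfold cc
  rw [Nat.factorial_succ r, Nat.factorial_succ k]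
  have p1 : ((k.factorial : ℚ)) ≠ 0 := by exact_mod_cast k.factorial_pos.ne'
  have p2 : ((2 : ℚ)) ^ k ≠ 0 := by positivity
  have p3 : ((k : ℚ)) + 1 ≠ 0 := by positivity
  push_cast
  field_simp
  ring

lemma cc_zero (r : ℕ) : cc r 0 * ((r : ℚ) + 1) = cc (r + 1) 0 := by
  unfold cc
  rw [Nat.factorial_succ r]
  push_cast
  field_simp

lemma cc_last (m : ℕ) : cc (2 * m + 1) m = cc (2 * m + 1 + 1) (m + 1) := by
  unfold cc
  rw [Nat.factorial_succ (2 * m + 1), Nat.factorial_succ m, pow_succ]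
  have p1 : ((m.factorial : ℚ)) ≠ 0 := by exact_mod_cast m.factorial_pos.ne'
  have p2 : ((2 : ℚ)) ^ m ≠ 0 := by positivity
  have p3 : ((m : ℚ)) + 1 ≠ 0 := by positivity
  push_cast
  field_simp
  ring

end

section

variable {A : Type*} [Ring A] [Algebra ℚ A] (x D : A) (h : D * x = x * D + 1)

include h in
lemma weyl_step (r : ℕ) :
    (∑ k ∈ range (r / 2 + 1), cc r k • TT x D (r - 2 * k)) * (x + D)
      = ∑ k ∈ range ((r + 1) / 2 + 1), cc (r + 1) k • TT x D (r + 1 - 2 * k) := by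
  rw [Finset.sum_mul]
  have hterm : ∀ k, 2 * k + 1 ≤ r →
      (cc r k • TT x D (r - 2 * k)) * (x + D)
        = (cc r k * ((r + 1 - 2 * k : ℕ) : ℚ)) • TT x D (r + 1 - 2 * k)
          + cc r k • TT x D (r - 2 * k - 1) := by
    intro k hk
    have e : r - 2 * k = (r - 2 * k - 1) + 1 := by omega
    rw [smul_mul_assoc]
    conv_lhs => rw [e]
    rw [TT_succ_mul x D h, smul_add, smul_smul,
      show r - 2 * k - 1 + 2 = r + 1 - 2 * k from by omega]
  rcases Nat.even_or_odd r with ⟨m, hm⟩ | ⟨m, hm⟩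
  · -- even case: r = m + m
    subst hm
    rw [show (m + m) / 2 = m from by omega, show (m + m + 1) / 2 = m from by omega]
    rw [Finset.sum_range_succ]
    have tail : (cc (m + m) m • TT x D (m + m - 2 * m)) * (x + D)
        = (cc (m + m) m * ((m + m + 1 - 2 * m : ℕ) : ℚ)) • TT x D (m + m + 1 - 2 * m) := by
      rw [smul_mul_assoc, show m + m - 2 * m = 0 from by omega,
        show m + m + 1 - 2 * m = 1 from by omega, TT_zero_mul x D]
      norm_num
    rw [tail]
    have body : ∀ k ∈ range m, (cc (m + m) k • TT x D (m + m - 2 * k)) * (x + D)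
        = (cc (m + m) k * ((m + m + 1 - 2 * k : ℕ) : ℚ)) • TT x D (m + m + 1 - 2 * k)
          + cc (m + m) k • TT x D (m + m - 2 * k - 1) := by
      intro k hk
      exact hterm k (by have := mem_range.mp hk; omega)
    rw [Finset.sum_congr rfl body, Finset.sum_add_distrib, add_right_comm,
      ← Finset.sum_range_succ
        (fun k => (cc (m + m) k * ((m + m + 1 - 2 * k : ℕ) : ℚ)) • TT x D (m + m + 1 - 2 * k)) m,
      Finset.sum_range_succ' _ m, Finset.sum_range_succ' _ m, add_right_comm,
      ← Finset.sum_add_distrib]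
    congr 1
    · refine Finset.sum_congr rfl fun k hk => ?_
      have hk' : k < m := mem_range.mp hk
      have e1 : m + m + 1 - 2 * (k + 1) = m + m - 2 * k - 1 := by omega
      rw [e1, ← add_smul]
      congr 1
      have e3 : ((m + m + 1 - 2 * (k + 1) : ℕ) : ℚ) = ((m + m : ℕ) : ℚ) - 2 * (k + 1) + 1 := by
        push_cast [Nat.cast_sub (by omega : 2 * (k + 1) ≤ m + m + 1)]
        ring
      rw [show m + m + 1 - 2 * (k + 1) = m + m - 2 * k - 1 from e1] at e3
      rw [e3]
      exact cc_rec (m + m) k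
    · rw [show m + m + 1 - 2 * 0 = m + m + 1 from by omega]
      congr 1
      rw [show ((m + m + 1 : ℕ) : ℚ) = ((m + m : ℕ) : ℚ) + 1 from by push_cast; ring]
      exact cc_zero (m + m)
  · -- odd case: r = 2 * m + 1
    subst hm
    rw [show (2 * m + 1) / 2 = m from by omega, show (2 * m + 1 + 1) / 2 = m + 1 from by omega]
    have body : ∀ k ∈ range (m + 1), (cc (2 * m + 1) k • TT x D (2 * m + 1 - 2 * k)) * (x + D)
        = (cc (2 * m + 1) k * ((2 * m + 1 + 1 - 2 * k : ℕ) : ℚ)) • TT x D (2 * m + 1 + 1 - 2 * k)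
          + cc (2 * m + 1) k • TT x D (2 * m + 1 - 2 * k - 1) := by
      intro k hk
      have e := hterm k (by have := mem_range.mp hk; omega)
      rwa [show 2 * m + 1 + 1 - 2 * k = 2 * m + 1 + 1 - 2 * k from rfl] at e
    rw [Finset.sum_congr rfl body, Finset.sum_add_distrib,
      Finset.sum_range_succ' (fun k => (cc (2 * m + 1) k * ((2 * m + 1 + 1 - 2 * k : ℕ) : ℚ)) •
        TT x D (2 * m + 1 + 1 - 2 * k)) m,
      Finset.sum_range_succ (fun k => cc (2 * m + 1) k • TT x D (2 * m + 1 - 2 * k - 1)) m,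
      Finset.sum_range_succ _ (m + 1), Finset.sum_range_succ' _ m,
      add_add_add_comm, ← Finset.sum_add_distrib]
    conv_rhs => rw [add_assoc]
    congr 1
    · refine Finset.sum_congr rfl fun k hk => ?_
      have hk' : k < m := mem_range.mp hk
      have e1 : 2 * m + 1 + 1 - 2 * (k + 1) = 2 * m + 1 - 2 * k - 1 := by omega
      rw [e1, ← add_smul]
      congr 1
      have e3 : ((2 * m + 1 - 2 * k - 1 : ℕ) : ℚ)
          = ((2 * m + 1 : ℕ) : ℚ) - 2 * (k + 1) + 1 := by
        rw [show (2 * m + 1 - 2 * k - 1 : ℕ) = 2 * (m - k) from by omega,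
          Nat.cast_mul, Nat.cast_sub hk'.le]
        push_cast
        ring
      rw [e3]
      exact cc_rec (2 * m + 1) k
    · congr 1
      · norm_num
        rw [show (2 * (m : ℚ) + 1 + 1) = ((2 * m + 1 : ℕ) : ℚ) + 1 from by push_cast; ring]
        rw [cc_zero (2 * m + 1)]
      · rw [show 2 * m + 1 + 1 - 2 * (m + 1) = 0 from by omega,
          show 2 * m + 1 - 2 * m - 1 = 0 from by omega]
        congr 1
        exact cc_last m


include h in
lemma weyl_main (r : ℕ) :
    (x + D) ^ r = ∑ k ∈ range (r / 2 + 1), cc r k • TT x D (r - 2 * k) := by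
  induction r with
  | zero => simp [cc, TT, Nat.factorial]
  | succ n ih => rw [pow_succ, ih, weyl_step x D h n]

end

/-- Binomial theorem for `(x + D)^r` in the Weyl algebra `D*x = x*D + 1`. -/
theorem weyl_binomial {A : Type*} [Ring A] [Algebra ℚ A] (x D : A)
    (h : D * x = x * D + 1) (r : ℕ) :
    (x + D) ^ r =
      ∑ k ∈ Finset.range (r / 2 + 1),
        ((r.factorial : ℚ) / (2 ^ k * k.factorial)) •
          ∑ jl ∈ Finset.HasAntidiagonal.antidiagonal (r - 2 * k),
            ((1 : ℚ) / (jl.1.factorial * jl.2.factorial)) • (x ^ jl.1 * D ^ jl.2) := by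
  rw [weyl_main x D h r]
  refine Finset.sum_congr rfl fun k _ => ?_
  rw [Finset.Nat.sum_antidiagonal_eq_sum_range_succ_mk]
  rfl
end

section
/- In the algebra generated by N and n with relation Nn = nN + N, for all r ≥ 2: the terms of (N+n)^r of total degree ≥ r−1 agree with those of the symmetrized expansion ((N+n))^r + C(r,2)·N·((N+n))^{r-2}, where ((N+n))^s denotes Σ_{i=0}^{s} C(s,i) n^i N^{s-i}. Equivalently, (N+n)^r − Σ_i C(r,i) n^i N^{r-i} − C(r,2)·Σ_i C(r-2,i) n^i N^{r-1-i} is a sum of normally ordered monomials n^i N^j with i + j ≤ r − 2. -/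
section Aux
variable {A : Type*} [Ring A] [Algebra ℚ A]

/-- Submodule of elements expressible as combinations of `n^i N^j` with `i+j ≤ d`. -/
def Qsub (n N : A) (d : ℕ) : Submodule ℚ A where
  carrier := {x | ∃ c : ℕ → ℕ → ℚ,
    x = ∑ i ∈ Finset.range (d+1), ∑ j ∈ Finset.range (d+1-i), c i j • (n^i * N^j)}
  add_mem' := by
    rintro a b ⟨c, rfl⟩ ⟨c', rfl⟩
    exact ⟨c + c', by simp [add_smul, Finset.sum_add_distrib]⟩
  zero_mem' := ⟨0, by simp⟩
  smul_mem' := by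
    rintro q a ⟨c, rfl⟩
    exact ⟨fun i j => q * c i j, by simp [Finset.smul_sum, smul_smul]⟩

lemma mem_Qsub (n N : A) {d i j : ℕ} (hij : i + j ≤ d) : n^i * N^j ∈ Qsub n N d := by
  refine ⟨fun a b => if a = i ∧ b = j then 1 else 0, ?_⟩
  rw [Finset.sum_eq_single i]
  · rw [Finset.sum_eq_single j]
    · simp
    · intro b _ hb; simp [hb]
    · intro hj; exact absurd (Finset.mem_range.mpr (by omega)) hj
  · intro b _ hb
    apply Finset.sum_eq_zero
    intro j' _
    simp [hb]
  · intro hi; exact absurd (Finset.mem_range.mpr (by omega)) hi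

lemma Npow_mul (n N : A) (h : N * n = n * N + N) (j : ℕ) :
    N^j * n = n * N^j + (j : ℚ) • N^j := by
  induction j with
  | zero => simp
  | succ j ih =>
    rw [pow_succ, mul_assoc, h, mul_add, ← mul_assoc, ih, add_mul, smul_mul_assoc,
      mul_assoc]
    push_cast
    rw [add_smul, one_smul]
    abel

lemma mono_mul_s6 (n N : A) (h : N * n = n * N + N) (i j : ℕ) :
    (n^i * N^j) * (N + n)
      = n^i * N^(j+1) + n^(i+1) * N^j + (j : ℚ) • (n^i * N^j) := by
  rw [mul_add, mul_assoc, ← pow_succ, mul_assoc, Npow_mul n N h, mul_add,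
    ← mul_assoc, ← pow_succ, mul_smul_comm]
  abel

lemma Qsub_mul (n N : A) (h : N * n = n * N + N) {d : ℕ} {x : A}
    (hx : x ∈ Qsub n N d) : x * (N + n) ∈ Qsub n N (d+1) := by
  obtain ⟨c, rfl⟩ := hx
  rw [Finset.sum_mul]
  refine Submodule.sum_mem _ fun i hi => ?_
  rw [Finset.sum_mul]
  refine Submodule.sum_mem _ fun j hj => ?_
  rw [smul_mul_assoc]
  refine Submodule.smul_mem _ _ ?_
  rw [mono_mul_s6 n N h]
  have hi' := Finset.mem_range.mp hi
  have hj' := Finset.mem_range.mp hj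
  refine add_mem (add_mem ?_ ?_) (Submodule.smul_mem _ _ ?_) <;>
    exact mem_Qsub n N (by omega)

/-- Pascal recombination. -/
lemma pascal (n N : A) (s t : ℕ) :
    ∑ i ∈ Finset.range (s+1), (s.choose i : ℚ) • (n^i * N^(s+t+1-i))
      + ∑ i ∈ Finset.range (s+1), (s.choose i : ℚ) • (n^(i+1) * N^(s+t-i))
    = ∑ i ∈ Finset.range (s+2), ((s+1).choose i : ℚ) • (n^i * N^(s+t+1-i)) := by
  rw [Finset.sum_range_succ' (fun i => (s.choose i : ℚ) • (n^i * N^(s+t+1-i))) s,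
    Finset.sum_range_succ (fun i => (s.choose i : ℚ) • (n^(i+1) * N^(s+t-i))) s,
    Finset.sum_range_succ' (fun i => ((s+1).choose i : ℚ) • (n^i * N^(s+t+1-i))) (s+1),
    Finset.sum_range_succ (fun i => ((s+1).choose (i+1) : ℚ) • (n^(i+1) * N^(s+t+1-(i+1)))) s]
  have e1 : ∀ i, s + t + 1 - (i+1) = s + t - i := fun i => by omega
  have e2 : s + t - s = t := by omega
  simp only [e1, e2, Nat.choose_self, Nat.choose_zero_right, Nat.cast_one, one_smul, pow_zero,
    Nat.add_sub_cancel, Nat.choose_succ_self_right]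
  have e3 : ∀ i ∈ Finset.range s,
      ((s+1).choose (i+1) : ℚ) • (n^(i+1) * N^(s+t-i))
        = (s.choose (i+1) : ℚ) • (n^(i+1) * N^(s+t-i))
          + (s.choose i : ℚ) • (n^(i+1) * N^(s+t-i)) := by
    intro i _
    rw [Nat.choose_succ_succ, Nat.cast_add, add_smul, add_comm]
  rw [Finset.sum_congr rfl e3, Finset.sum_add_distrib]
  abel

end Aux

/-- In a ℚ-algebra with `N*n = n*N + N`, for `r ≥ 2`, the difference between
`(N+n)^r` and the first two terms of the symmetrized expansion,
`Σ_i C(r,i) n^i N^{r-i} + C(r,2)·Σ_i C(r-2,i) n^i N^{r-1-i}`, is a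
ℚ-linear combination of normally ordered monomials `n^i N^j` with `i+j ≤ r-2`. -/
theorem shift_expansion_leading_terms {A : Type*} [Ring A] [Algebra ℚ A]
    (N n : A) (h : N * n = n * N + N) (r : ℕ) (hr : 2 ≤ r) :
    ∃ c : ℕ → ℕ → ℚ,
      (N + n) ^ r
        - (∑ i ∈ Finset.range (r + 1), (r.choose i : ℚ) • (n ^ i * N ^ (r - i)))
        - (r.choose 2 : ℚ) •
            (∑ i ∈ Finset.range (r - 1), ((r - 2).choose i : ℚ) • (n ^ i * N ^ (r - 1 - i)))
      = ∑ i ∈ Finset.range (r - 1), ∑ j ∈ Finset.range (r - 1 - i),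
          c i j • (n ^ i * N ^ j) := by
  -- abbreviations
  set Sm : ℕ → A := fun s => ∑ i ∈ Finset.range (s+1), (s.choose i : ℚ) • (n^i * N^(s-i)) with hSm
  set Um : ℕ → A := fun s => ∑ i ∈ Finset.range (s+1), (s.choose i : ℚ) • (n^i * N^(s+1-i)) with hUm
  -- identity A
  have idA : ∀ s : ℕ, Sm (s+1) * (N+n) = Sm (s+2) + ((s+1 : ℕ) : ℚ) • Um s := by
    intro s
    have P := pascal n N (s+1) 0
    simp only [Nat.add_zero] at P
    simp only [hSm, hUm]
    rw [Finset.sum_mul]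
    have step : ∀ i ∈ Finset.range (s+1+1),
        ((s+1).choose i : ℚ) • (n^i * N^(s+1-i)) * (N+n)
          = ((s+1).choose i : ℚ) • (n^i * N^(s+1+1-i))
            + ((s+1).choose i : ℚ) • (n^(i+1) * N^(s+1-i))
            + (((s+1).choose i : ℚ) * ((s+1-i : ℕ) : ℚ)) • (n^i * N^(s+1-i)) := by
      intro i hi
      have hi' : i < s+2 := Finset.mem_range.mp hi
      rw [smul_mul_assoc, mono_mul_s6 n N h, show s+1-i+1 = s+1+1-i by omega,
        smul_add, smul_add, smul_smul]
    rw [Finset.sum_congr rfl step, Finset.sum_add_distrib, Finset.sum_add_distrib, P]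
    simp only [show s+1+1 = s+2 by omega, show s+1+2 = s+3 by omega, show s+2+1 = s+3 by omega]
    congr 1
    rw [Finset.sum_range_succ, Nat.sub_self]
    simp only [Nat.cast_zero, mul_zero, zero_smul, add_zero, Nat.cast_ofNat]
    rw [Finset.smul_sum]
    refine Finset.sum_congr rfl fun i hi => ?_
    have hi' : i < s+1 := Finset.mem_range.mp hi
    rw [smul_smul]
    congr 1
    have key : (s+1).choose i * (s+1-i) = (s+1) * s.choose i := by
      have h1 := Nat.choose_succ_right_eq (s+1) i
      have h2 := Nat.add_one_mul_choose_eq s i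
      omega
    exact_mod_cast congrArg (fun t : ℕ => (t:ℚ)) key
  -- identity B
  have idB : ∀ s : ℕ, Um s * (N+n)
      = Um (s+1) + ∑ i ∈ Finset.range (s+1),
          ((s.choose i : ℚ) * ((s+1-i : ℕ) : ℚ)) • (n^i * N^(s+1-i)) := by
    intro s
    have P := pascal n N s 1
    simp only [hUm]
    rw [Finset.sum_mul]
    have step : ∀ i ∈ Finset.range (s+1),
        (s.choose i : ℚ) • (n^i * N^(s+1-i)) * (N+n)
          = (s.choose i : ℚ) • (n^i * N^(s+1+1-i))
            + (s.choose i : ℚ) • (n^(i+1) * N^(s+1-i))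
            + ((s.choose i : ℚ) * ((s+1-i : ℕ) : ℚ)) • (n^i * N^(s+1-i)) := by
      intro i hi
      have hi' : i < s+1 := Finset.mem_range.mp hi
      rw [smul_mul_assoc, mono_mul_s6 n N h, show s+1-i+1 = s+1+1-i by omega,
        smul_add, smul_add, smul_smul]
    rw [Finset.sum_congr rfl step, Finset.sum_add_distrib, Finset.sum_add_distrib, P]
  -- main induction
  have key : ∀ k : ℕ,
      (N+n)^(k+2) - Sm (k+2) - (((k+2).choose 2 : ℕ) : ℚ) • Um k ∈ Qsub n N k := by
    intro k
    induction k with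
    | zero =>
      have e : (N+n)^(0+2) - Sm (0+2) - (((0+2).choose 2 : ℕ) : ℚ) • Um 0 = 0 := by
        simp only [hSm, hUm]
        norm_num [Finset.sum_range_succ]
        have h2 : (N + n) ^ 2 = N*N + (n*N + N) + n*N + n*n := by
          rw [pow_two, add_mul, mul_add, mul_add, h]; abel
        rw [h2]
        simp only [pow_two]
        module
      rw [e]
      exact Submodule.zero_mem _
    | succ k ih =>
      have hwmem : (∑ i ∈ Finset.range (k+1),
          ((k.choose i : ℚ) * ((k+1-i : ℕ) : ℚ)) • (n^i * N^(k+1-i))) ∈ Qsub n N (k+1) := by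
        refine Submodule.sum_mem _ fun i hi => Submodule.smul_mem _ _ (mem_Qsub n N ?_)
        have := Finset.mem_range.mp hi; omega
      have hc : (((k+3).choose 2 : ℕ) : ℚ) = ((k+2 : ℕ) : ℚ) + (((k+2).choose 2 : ℕ) : ℚ) := by
        have := Nat.choose_succ_succ (k+2) 1
        simp [Nat.choose_one_right] at this
        push_cast [this]
        ring
      have expand : (N+n)^(k+1+2) - Sm (k+1+2) - (((k+1+2).choose 2 : ℕ) : ℚ) • Um (k+1)
          = ((N+n)^(k+2) - Sm (k+2) - (((k+2).choose 2 : ℕ) : ℚ) • Um k) * (N+n)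
            + (((k+2).choose 2 : ℕ) : ℚ) • (∑ i ∈ Finset.range (k+1),
                ((k.choose i : ℚ) * ((k+1-i : ℕ) : ℚ)) • (n^i * N^(k+1-i))) := by
        rw [show k+1+2 = k+2+1 by omega, pow_succ, sub_mul, sub_mul, smul_mul_assoc]
        rw [show (k:ℕ)+2 = (k+1)+1 by omega] at hc ⊢
        rw [idA (k+1), idB k]
        rw [show (k:ℕ)+1+1+1 = k+1+2 by omega, show (k:ℕ)+1+1 = k+2 by omega] at hc ⊢
        rw [hc]
        module
      rw [expand]
      exact Submodule.add_mem _ (Qsub_mul n N h ih) (Submodule.smul_mem _ _ hwmem)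
  obtain ⟨k, rfl⟩ : ∃ k, r = k + 2 := ⟨r - 2, by omega⟩
  have kk := key k
  simp only [hSm, hUm] at kk
  simp only [show k+2-1 = k+1 by omega, show k+2-2 = k by omega]
  exact kk
end
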